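/- Fix k ≥ 1 and let r_k(t) = (⌊(k+1){t}⌋, ..., ⌊(k+1){k·t}⌋). The function r_k is piecewise constant, and any two consecutive discontinuities of r_k are at distance at least 1/(k(k+1)); consequently, if p > k(k+1) then r_k((1/(k+1))·Z) ⊆ r_k((1/p)·Z), i.e. every value attained by r_k at a rational with denominator k+1 is also attained at some rational with denominator p. -/
import Mathlib


/-- The discretized position vector: i-th coordinate is ⌊(k+1)·{(i+1)·t}⌋. -/
noncomputable def rk (k : ℕ) (t : ℝ) : Fin k → ℤ :=
  fun i => ⌊((k : ℝ) + 1) * Int.fract ((((i : ℕ) : ℝ) + 1) * t)⌋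

theorem stmt_6 (k : ℕ) (hk : 1 ≤ k) :
    (∀ (n : ℤ) (t : ℝ), (n : ℝ) / ((k : ℝ) + 1) ≤ t →
        t < (n : ℝ) / ((k : ℝ) + 1) + 1 / ((k : ℝ) * ((k : ℝ) + 1)) →
        rk k t = rk k ((n : ℝ) / ((k : ℝ) + 1))) ∧
    (∀ p : ℕ, (p : ℝ) > (k : ℝ) * ((k : ℝ) + 1) →
      ∀ n : ℤ, ∃ m : ℤ, rk k ((n : ℝ) / ((k : ℝ) + 1)) = rk k ((m : ℝ) / (p : ℝ))) := by
  have hkpos : (0:ℝ) < (k:ℝ) := by exact_mod_cast hk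
  have hK : (0:ℝ) < (k:ℝ) + 1 := by linarith
  have main : ∀ (n : ℤ) (t : ℝ), (n : ℝ) / ((k : ℝ) + 1) ≤ t →
      t < (n : ℝ) / ((k : ℝ) + 1) + 1 / ((k : ℝ) * ((k : ℝ) + 1)) →
      rk k t = rk k ((n : ℝ) / ((k : ℝ) + 1)) := by
    intro n t h1 h2
    funext i
    simp only [rk]
    set K : ℝ := (k:ℝ) + 1 with hKdef
    set c : ℝ := (n:ℝ) / K with hc
    set J : ℝ := ((i:ℕ):ℝ) + 1 with hJ
    have hJpos : 0 < J := by positivity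
    have hJk : J ≤ (k:ℝ) := by
      have hi := i.isLt
      have : ((i:ℕ):ℝ) + 1 ≤ (k:ℝ) := by exact_mod_cast Nat.succ_le_of_lt hi
      simpa [hJ] using this
    set s : ℝ := J * c with hs
    set δ : ℝ := J * (t - c) with hδ
    have hδ0 : 0 ≤ δ := by
      have : 0 ≤ t - c := by linarith
      positivity
    have hδK : K * δ < 1 := by
      have h2' : t - c < 1 / ((k:ℝ) * K) := by linarith
      have h3 : δ < J * (1 / ((k:ℝ) * K)) := mul_lt_mul_of_pos_left h2' hJpos
      have h4 : J * (1 / ((k:ℝ) * K)) ≤ (k:ℝ) * (1 / ((k:ℝ) * K)) :=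
        mul_le_mul_of_nonneg_right hJk (by positivity)
      have h5 : (k:ℝ) * (1 / ((k:ℝ) * K)) = 1 / K := by field_simp
      have h6 : δ < 1 / K := by linarith
      calc K * δ < K * (1 / K) := mul_lt_mul_of_pos_left h6 hK
        _ = 1 := by field_simp
    have hKs : K * s = J * (n:ℝ) := by
      rw [hs, hc]; field_simp; try ring
    set a : ℤ := ((i:ℕ):ℤ) * n + n - ((k:ℤ) + 1) * ⌊s⌋ with ha
    have hA : K * Int.fract s = (a:ℝ) := by
      rw [Int.fract, mul_sub, hKs]
      push_cast [ha, hJ, hKdef]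
      try ring
    have hf0 : 0 ≤ Int.fract s := Int.fract_nonneg s
    have hf1 : Int.fract s < 1 := Int.fract_lt_one s
    have haK : (a:ℝ) < K := by nlinarith
    have haleK : (a:ℝ) ≤ K - 1 := by
      have h1' : a < (k:ℤ) + 1 := by
        exact_mod_cast (show (a:ℝ) < ((k:ℤ):ℝ) + 1 by push_cast; simp [hKdef] at haK; linarith)
      have h2' : (a:ℝ) ≤ (k:ℝ) := by exact_mod_cast (by omega : a ≤ (k:ℤ))
      simp [hKdef]; linarith
    have ha0 : (0:ℝ) ≤ (a:ℝ) := by rw [← hA]; positivity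
    have hin : Int.fract s + δ < 1 := by nlinarith
    have hJt : J * t = (⌊s⌋ : ℝ) + (Int.fract s + δ) := by
      have h : J * t = s + δ := by rw [hs, hδ]; ring
      rw [h, Int.fract]; ring
    have hfJt : Int.fract (J * t) = Int.fract s + δ := by
      rw [hJt, Int.fract_intCast_add, Int.fract_eq_self.mpr ⟨by linarith, hin⟩]
    rw [hfJt]
    have hfloor : ∀ x : ℝ, 0 ≤ x → x < 1 → ⌊(a:ℝ) + x⌋ = a := by
      intro x hx0 hx1
      rw [Int.floor_eq_iff] <;> push_cast <;> constructor <;> linarith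
    have e1 : ⌊K * (Int.fract s + δ)⌋ = a := by
      have : K * (Int.fract s + δ) = (a:ℝ) + K * δ := by rw [mul_add, hA]
      rw [this]
      exact hfloor _ (by positivity) hδK
    have e2 : ⌊K * Int.fract s⌋ = a := by
      rw [hA]; exact Int.floor_intCast a
    rw [e1, e2]
  refine ⟨main, ?_⟩
  intro p hp n
  have hppos : (0:ℝ) < (p:ℝ) := by nlinarith
  refine ⟨⌈(n:ℝ) * (p:ℝ) / ((k:ℝ) + 1)⌉, ?_⟩
  set m : ℤ := ⌈(n:ℝ) * (p:ℝ) / ((k:ℝ) + 1)⌉ with hm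
  have h1 : (n:ℝ) / ((k:ℝ) + 1) ≤ (m:ℝ) / (p:ℝ) := by
    rw [div_le_div_iff₀ hK hppos]
    have := Int.le_ceil ((n:ℝ) * (p:ℝ) / ((k:ℝ) + 1))
    rw [div_le_iff₀ hK] at this
    linarith
  have h2 : (m:ℝ) / (p:ℝ) < (n:ℝ) / ((k:ℝ) + 1) + 1 / ((k:ℝ) * ((k:ℝ) + 1)) := by
    have hc : (m:ℝ) < (n:ℝ) * (p:ℝ) / ((k:ℝ) + 1) + 1 :=
      Int.ceil_lt_add_one ((n:ℝ) * (p:ℝ) / ((k:ℝ) + 1))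
    have key : (n:ℝ) / ((k:ℝ) + 1) + 1 / (p:ℝ) = ((n:ℝ) * (p:ℝ) / ((k:ℝ) + 1) + 1) / (p:ℝ) := by
      field_simp
      try ring
    have h3 : (m:ℝ) / (p:ℝ) < ((n:ℝ) * (p:ℝ) / ((k:ℝ) + 1) + 1) / (p:ℝ) :=
      (div_lt_div_iff_of_pos_right hppos).mpr hc
    have h4 : 1 / (p:ℝ) < 1 / ((k:ℝ) * ((k:ℝ) + 1)) :=
      one_div_lt_one_div_of_lt (by positivity) hp
    rw [← key] at h3
    linarith
  exact (main n ((m:ℝ)/(p:ℝ)) h1 h2).symm
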